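/- For all integers q ≥ 2, c ≥ 1, d ≥ 2, and every x ∈ (0, 1/q²): ω_{q,c,d}(x) < (c/2 − 1)·x·ln x + κ_{q,c,d}·x, where κ_{q,c,d} := ln(q−1) + (c/2)·ln(d−1) + 3c. -/

import Mathlib

open Real Set Filter Polynomial
open scoped Classical

/-- The entropy function `H_q`. -/
noncomputable def Hent (q : ℕ) (x : ℝ) : ℝ :=
  x * Real.log (1 / x) + (1 - x) * Real.log (1 / (1 - x)) + x * Real.log ((q : ℝ) - 1)

/-- The information divergence function `D(x‖y)`. -/
noncomputable def Dkl (x y : ℝ) : ℝ :=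
  x * Real.log (x / y) + (1 - x) * Real.log ((1 - x) / (1 - y))

/-- The function `ρ_{q,d}`. -/
noncomputable def rhoF (q d : ℕ) (x : ℝ) : ℝ :=
  Real.log (1 + ((q : ℝ) - 1) * (1 - (q : ℝ) * x / ((q : ℝ) - 1)) ^ d)

/-- The function `δ_{q,d}(x, x̂)`. -/
noncomputable def deltaTwo (q d : ℕ) (x xh : ℝ) : ℝ :=
  (d : ℝ) * Dkl x xh + rhoF q d xh

/-- The function `δ_{q,d}(x) = inf_{x̂ ∈ (0,1)} δ_{q,d}(x, x̂)`. -/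
noncomputable def deltaMin (q d : ℕ) (x : ℝ) : ℝ :=
  sInf ((fun xh => deltaTwo q d x xh) '' Set.Ioo 0 1)

/-- The asymptotic growth rate `ω_{q,c,d}`. -/
noncomputable def omegaF (q c d : ℕ) (x : ℝ) : ℝ :=
  Hent q x + ((c : ℝ) / (d : ℝ)) * (deltaMin q d x - Real.log (q : ℝ))

private lemma dkl_nonneg {x y : ℝ} (hx0 : 0 < x) (hx1 : x < 1) (hy0 : 0 < y) (hy1 : y < 1) :
    0 ≤ Dkl x y := by
  have l1 : Real.log (y / x) ≤ y / x - 1 := Real.log_le_sub_one_of_pos (by positivity)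
  have l2 : Real.log ((1 - y) / (1 - x)) ≤ (1 - y) / (1 - x) - 1 :=
    Real.log_le_sub_one_of_pos (div_pos (by linarith) (by linarith))
  have m1 : x * Real.log (y / x) ≤ y - x := by
    have h := mul_le_mul_of_nonneg_left l1 hx0.le
    have h2 : x * (y / x - 1) = y - x := by field_simp
    linarith
  have m2 : (1 - x) * Real.log ((1 - y) / (1 - x)) ≤ x - y := by
    have h := mul_le_mul_of_nonneg_left l2 (by linarith : (0:ℝ) ≤ 1 - x)
    have h2 : (1 - x) * ((1 - y) / (1 - x) - 1) = x - y := by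
      have hne : (1:ℝ) - x ≠ 0 := by linarith
      field_simp
      ring
    linarith
  have e1 : Real.log (x / y) = Real.log x - Real.log y := Real.log_div hx0.ne' hy0.ne'
  have e2 : Real.log (y / x) = Real.log y - Real.log x := Real.log_div hy0.ne' hx0.ne'
  have e3 : Real.log ((1 - x) / (1 - y)) = Real.log (1 - x) - Real.log (1 - y) :=
    Real.log_div (by linarith) (by linarith)
  have e4 : Real.log ((1 - y) / (1 - x)) = Real.log (1 - y) - Real.log (1 - x) :=
    Real.log_div (by linarith) (by linarith)
  rw [e2] at m1
  rw [e4] at m2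
  unfold Dkl
  rw [e1, e3]
  nlinarith [m1, m2]

private lemma dkl_upper {x T : ℝ} (hx0 : 0 < x) (hx1 : x < 1) (hT0 : 0 < T) (hT1 : T < 1) :
    Dkl x T ≤ x * (Real.log x - Real.log T) + (1 - x) * ((1 - x) / (1 - T) - 1) := by
  unfold Dkl
  have e1 : Real.log (x / T) = Real.log x - Real.log T := Real.log_div hx0.ne' hT0.ne'
  have l2 : Real.log ((1 - x) / (1 - T)) ≤ (1 - x) / (1 - T) - 1 :=
    Real.log_le_sub_one_of_pos (div_pos (by linarith) (by linarith))
  have h := mul_le_mul_of_nonneg_left l2 (by linarith : (0:ℝ) ≤ 1 - x)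
  rw [e1]
  linarith

private lemma div_mul_helper {a b z : ℝ} (hb : b ≠ 0) : a / b * (b * z) = a * z := by
  field_simp

private lemma rho_upper (q d : ℕ) (hq : 2 ≤ q) {T : ℝ} (hT0 : 0 < T)
    (hs12 : (q:ℝ) * T / ((q:ℝ) - 1) ≤ 1/2) :
    rhoF q d T ≤ Real.log (q:ℝ) - (d:ℝ) * T + (d:ℝ)^2 * (q:ℝ) * T^2 / ((q:ℝ) - 1) := by
  have hQ : (2:ℝ) ≤ (q:ℝ) := by exact_mod_cast hq
  have hQ1 : (0:ℝ) < (q:ℝ) - 1 := by linarith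
  set s : ℝ := (q:ℝ) * T / ((q:ℝ) - 1) with hsdef
  have hs0 : 0 < s := div_pos (by nlinarith) hQ1
  have hu0 : (0:ℝ) ≤ (d:ℝ) * s := by positivity
  have h1s : (0:ℝ) ≤ 1 - s := by linarith
  have hb : 1 - s ≤ Real.exp (-s) := by
    have := Real.add_one_le_exp (-s); linarith
  have hbd : (1 - s)^d ≤ Real.exp (-((d:ℝ) * s)) := by
    calc (1 - s)^d ≤ (Real.exp (-s))^d := pow_le_pow_left₀ h1s hb d
    _ = Real.exp (-((d:ℝ) * s)) := by
        rw [← Real.exp_nat_mul]; ring_nf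
  have hexp : Real.exp (-((d:ℝ) * s)) ≤ 1 / (1 + (d:ℝ) * s) := by
    have h2 : 1 + (d:ℝ) * s ≤ Real.exp ((d:ℝ) * s) := by
      have := Real.add_one_le_exp ((d:ℝ) * s); linarith
    have h3 : (0:ℝ) < 1 + (d:ℝ) * s := by linarith
    rw [Real.exp_neg, inv_eq_one_div]
    exact one_div_le_one_div_of_le h3 h2
  have hA0 : (0:ℝ) < 1 + ((q:ℝ) - 1) * (1 - s)^d := by
    have := pow_nonneg h1s d
    nlinarith
  have hAle : 1 + ((q:ℝ) - 1) * (1 - s)^d ≤ 1 + ((q:ℝ) - 1) / (1 + (d:ℝ) * s) := by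
    have h4 := hbd.trans hexp
    have h5 := mul_le_mul_of_nonneg_left h4 (by linarith : (0:ℝ) ≤ (q:ℝ) - 1)
    rw [mul_one_div] at h5
    linarith
  have hA'0 : (0:ℝ) < 1 + ((q:ℝ) - 1) / (1 + (d:ℝ) * s) := by positivity
  have hlog1 : Real.log (1 + ((q:ℝ) - 1) * (1 - s)^d)
      ≤ Real.log (1 + ((q:ℝ) - 1) / (1 + (d:ℝ) * s)) := Real.log_le_log hA0 hAle
  have hlog2 : Real.log (1 + ((q:ℝ) - 1) / (1 + (d:ℝ) * s))
      ≤ Real.log (q:ℝ) + ((1 + ((q:ℝ) - 1) / (1 + (d:ℝ) * s)) / (q:ℝ) - 1) := by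
    have h5 : Real.log ((1 + ((q:ℝ) - 1) / (1 + (d:ℝ) * s)) / (q:ℝ))
        ≤ (1 + ((q:ℝ) - 1) / (1 + (d:ℝ) * s)) / (q:ℝ) - 1 :=
      Real.log_le_sub_one_of_pos (div_pos hA'0 (by linarith))
    rw [Real.log_div hA'0.ne' (by linarith : (q:ℝ) ≠ 0)] at h5
    linarith
  have hquad : (1 + ((q:ℝ) - 1) / (1 + (d:ℝ) * s)) / (q:ℝ) - 1
      ≤ (((q:ℝ) - 1) / (q:ℝ)) * (((d:ℝ) * s)^2 - (d:ℝ) * s) := by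
    have hds : (0:ℝ) < 1 + (d:ℝ) * s := by linarith
    have h6 : 1 / (1 + (d:ℝ) * s) - 1 ≤ ((d:ℝ) * s)^2 - (d:ℝ) * s := by
      rw [div_sub_one hds.ne']
      rw [div_le_iff₀ hds]
      nlinarith [pow_nonneg hu0 3]
    have h7 : (1 + ((q:ℝ) - 1) / (1 + (d:ℝ) * s)) / (q:ℝ) - 1
        = (((q:ℝ) - 1) / (q:ℝ)) * (1 / (1 + (d:ℝ) * s) - 1) := by
      field_simp
      ring
    rw [h7]
    exact mul_le_mul_of_nonneg_left h6 (by positivity)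
  have hfinal_eq : (((q:ℝ) - 1) / (q:ℝ)) * (((d:ℝ) * s)^2 - (d:ℝ) * s)
      = (d:ℝ)^2 * (q:ℝ) * T^2 / ((q:ℝ) - 1) - (d:ℝ) * T := by
    rw [hsdef]
    field_simp
  unfold rhoF
  rw [← hsdef]
  linarith

set_option maxHeartbeats 4000000 in
theorem omegaF_small_x_upper_bound (q c d : ℕ) (hq : 2 ≤ q) (hc : 1 ≤ c) (hd : 2 ≤ d)
    (x : ℝ) (hx : x ∈ Set.Ioo 0 (1 / (q : ℝ) ^ 2)) :
    omegaF q c d x <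
      ((c : ℝ) / 2 - 1) * x * Real.log x +
        (Real.log ((q : ℝ) - 1) + ((c : ℝ) / 2) * Real.log ((d : ℝ) - 1) + 3 * (c : ℝ)) * x := by
  obtain ⟨hx0, hx1⟩ := hx
  have hQ : (2:ℝ) ≤ (q:ℝ) := by exact_mod_cast hq
  have hD : (2:ℝ) ≤ (d:ℝ) := by exact_mod_cast hd
  have hC : (1:ℝ) ≤ (c:ℝ) := by exact_mod_cast hc
  have hQ1 : (0:ℝ) < (q:ℝ) - 1 := by linarith
  have hD1 : (1:ℝ) ≤ (d:ℝ) - 1 := by linarith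
  have hD1' : (0:ℝ) < (d:ℝ) - 1 := by linarith
  have hd0 : (0:ℝ) < (d:ℝ) := by linarith
  have hc0 : (0:ℝ) < (c:ℝ) := by linarith
  have hx4 : x < 1/4 := by
    have h4 : (4:ℝ) ≤ (q:ℝ)^2 := by nlinarith
    have h5 : 1 / (q:ℝ)^2 ≤ 1/4 := by
      apply one_div_le_one_div_of_le <;> nlinarith
    linarith
  have hx1' : x < 1 := by linarith
  set T : ℝ := Real.sqrt (x / ((d:ℝ) - 1)) / 2 with hTdef
  clear_value T
  have hxD : 0 < x / ((d:ℝ) - 1) := div_pos hx0 hD1'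
  have hT0 : 0 < T := by
    have := Real.sqrt_pos.mpr hxD
    rw [hTdef]; linarith
  have hTsq : T^2 = x / (4 * ((d:ℝ) - 1)) := by
    have h4 : ((d:ℝ) - 1) * 2^2 = 4 * ((d:ℝ) - 1) := by ring
    rw [hTdef, div_pow, Real.sq_sqrt hxD.le, div_div, h4]
  have hsx : Real.sqrt x ≤ 1/2 := by
    have h1 : Real.sqrt x ≤ Real.sqrt (1/4) := Real.sqrt_le_sqrt (by linarith)
    have h2 : Real.sqrt ((1:ℝ)/4) = 1/2 := by
      rw [show (1/4:ℝ) = (1/2)^2 by norm_num, Real.sqrt_sq (by norm_num : (0:ℝ) ≤ 1/2)]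
    linarith
  have hT14 : T ≤ 1/4 := by
    have h1 : Real.sqrt (x / ((d:ℝ) - 1)) ≤ Real.sqrt x :=
      Real.sqrt_le_sqrt (div_le_self hx0.le hD1)
    rw [hTdef]; linarith
  have hT1 : T < 1 := by linarith
  have hs12 : (q:ℝ) * T / ((q:ℝ) - 1) ≤ 1/2 := by
    have h1 : (q:ℝ) * T / ((q:ℝ) - 1) ≤ 2 * T := by
      rw [div_le_iff₀ hQ1]
      have h2 : (0:ℝ) ≤ T * ((q:ℝ) - 2) := mul_nonneg hT0.le (by linarith only [hQ])
      linarith only [h2]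
    linarith only [h1, hT14]
  have hrho := rho_upper q d hq hT0 hs12
  have hrho0 : 0 ≤ rhoF q d T := by
    unfold rhoF
    apply Real.log_nonneg
    have hbase : 0 ≤ 1 - (q:ℝ) * T / ((q:ℝ) - 1) := by linarith only [hs12]
    have hp := pow_nonneg hbase d
    have h6 := mul_nonneg (show (0:ℝ) ≤ (q:ℝ) - 1 by linarith only [hQ]) hp
    linarith only [h6]
  have hdkl0 : 0 ≤ Dkl x T := dkl_nonneg hx0 hx1' hT0 hT1
  have hdklU := dkl_upper hx0 hx1' hT0 hT1
  have hv0 : 0 ≤ deltaTwo q d x T := by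
    unfold deltaTwo
    have h6 : (0:ℝ) ≤ (d:ℝ) * Dkl x T := mul_nonneg hd0.le hdkl0
    linarith only [h6, hrho0]
  have hmem : deltaTwo q d x T ∈ (fun xh => deltaTwo q d x xh) '' Set.Ioo (0:ℝ) 1 :=
    ⟨T, ⟨hT0, hT1⟩, rfl⟩
  have hmin : deltaMin q d x ≤ deltaTwo q d x T := by
    unfold deltaMin
    by_cases hb : BddBelow ((fun xh => deltaTwo q d x xh) '' Set.Ioo (0:ℝ) 1)
    · exact csInf_le hb hmem
    · rw [Real.sInf_of_not_bddBelow hb]; exact hv0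
  have hdelta : deltaTwo q d x T ≤
      (d:ℝ) * (x * (Real.log x - Real.log T) + (1 - x) * ((1 - x) / (1 - T) - 1))
        + Real.log (q:ℝ) - (d:ℝ) * T + (d:ℝ)^2 * (q:ℝ) * T^2 / ((q:ℝ) - 1) := by
    unfold deltaTwo
    have h := mul_le_mul_of_nonneg_left hdklU hd0.le
    linarith only [h, hrho]
  have hCD : (0:ℝ) < (c:ℝ) / (d:ℝ) := div_pos hc0 hd0
  have homega : omegaF q c d x ≤ Hent q x + ((c:ℝ)/(d:ℝ)) * (deltaTwo q d x T - Real.log (q:ℝ)) := by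
    unfold omegaF
    have h := mul_le_mul_of_nonneg_left (sub_le_sub_right hmin (Real.log (q:ℝ))) hCD.le
    linarith only [h]
  have hkey : ((c:ℝ)/(d:ℝ)) * (deltaTwo q d x T - Real.log (q:ℝ))
      ≤ (c:ℝ) * (x * (Real.log x - Real.log T) + ((1 - x) * ((1 - x) / (1 - T) - 1)
          - T + (d:ℝ) * (q:ℝ) * T^2 / ((q:ℝ) - 1))) := by
    have h7 : deltaTwo q d x T - Real.log (q:ℝ)
        ≤ (d:ℝ) * (x * (Real.log x - Real.log T) + ((1 - x) * ((1 - x) / (1 - T) - 1)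
            - T + (d:ℝ) * (q:ℝ) * T^2 / ((q:ℝ) - 1))) := by
      have heq : (d:ℝ) * (x * (Real.log x - Real.log T) + ((1 - x) * ((1 - x) / (1 - T) - 1)
            - T + (d:ℝ) * (q:ℝ) * T^2 / ((q:ℝ) - 1)))
          = (d:ℝ) * (x * (Real.log x - Real.log T) + (1 - x) * ((1 - x) / (1 - T) - 1))
            - (d:ℝ) * T + (d:ℝ)^2 * (q:ℝ) * T^2 / ((q:ℝ) - 1) := by ring
      rw [heq]
      linarith only [hdelta]
    have h8 := mul_le_mul_of_nonneg_left h7 hCD.le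
    have h9 : ((c:ℝ)/(d:ℝ)) * ((d:ℝ) * (x * (Real.log x - Real.log T)
        + ((1 - x) * ((1 - x) / (1 - T) - 1) - T + (d:ℝ) * (q:ℝ) * T^2 / ((q:ℝ) - 1))))
        = (c:ℝ) * (x * (Real.log x - Real.log T) + ((1 - x) * ((1 - x) / (1 - T) - 1)
          - T + (d:ℝ) * (q:ℝ) * T^2 / ((q:ℝ) - 1))) :=
      div_mul_helper hd0.ne'
    linarith only [h8, h9]
  have hlogT : Real.log T = (Real.log x - Real.log ((d:ℝ) - 1)) / 2 - Real.log 2 := by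
    rw [hTdef, Real.log_div (Real.sqrt_ne_zero'.mpr hxD) two_ne_zero, Real.log_sqrt hxD.le,
      Real.log_div hx0.ne' hD1'.ne']
  have hHent : Hent q x = -(x * Real.log x) - (1 - x) * Real.log (1 - x)
      + x * Real.log ((q:ℝ) - 1) := by
    unfold Hent
    rw [one_div, one_div, Real.log_inv, Real.log_inv]
    ring
  have hE1 : -((1 - x) * Real.log (1 - x)) ≤ x := by
    have hne : (1:ℝ) - x ≠ 0 := by linarith
    have h8 : Real.log (1 / (1 - x)) ≤ 1 / (1 - x) - 1 :=
      Real.log_le_sub_one_of_pos (div_pos one_pos (by linarith))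
    rw [one_div, Real.log_inv] at h8
    have h9 := mul_le_mul_of_nonneg_left h8 (by linarith : (0:ℝ) ≤ 1 - x)
    have h10 : (1 - x) * ((1 - x)⁻¹ - 1) = x := by field_simp; ring
    linarith only [h9, h10]
  have hW : (1 - x) * ((1 - x) / (1 - T) - 1) - T + (d:ℝ) * (q:ℝ) * T^2 / ((q:ℝ) - 1)
      ≤ 7 * x / 12 := by
    have hkeyeq : (1 - x) * ((1 - x) / (1 - T) - 1) - T
        = (T^2 - T * x - x * (1 - x)) / (1 - T) := by
      have hne : (1:ℝ) - T ≠ 0 := by linarith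
      field_simp
      ring
    have h12 : (T^2 - T * x - x * (1 - x)) / (1 - T) ≤ (4/3) * T^2 - x * (1 - x) := by
      rw [div_le_iff₀ (by linarith : (0:ℝ) < 1 - T)]
      have f1 : (0:ℝ) ≤ T^2 * (1 - 4*T) :=
        mul_nonneg (sq_nonneg T) (by linarith only [hT14])
      have f2 : (0:ℝ) ≤ x * (1 - x) * T :=
        mul_nonneg (mul_nonneg hx0.le (by linarith only [hx1'])) hT0.le
      have f3 : (0:ℝ) ≤ T * x := mul_nonneg hT0.le hx0.le
      nlinarith [f1, f2, f3]
    have h12' : (1 - x) * ((1 - x) / (1 - T) - 1) - T ≤ (4/3) * T^2 - x * (1 - x) := by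
      rw [hkeyeq]; exact h12
    have h13 : (d:ℝ) * (q:ℝ) * T^2 / ((q:ℝ) - 1) ≤ x := by
      rw [div_le_iff₀ hQ1, hTsq]
      have heq : (d:ℝ) * (q:ℝ) * (x / (4 * ((d:ℝ) - 1))) = (d:ℝ) * (q:ℝ) * x / (4 * ((d:ℝ) - 1)) := by
        ring
      rw [heq, div_le_iff₀ (by linarith : (0:ℝ) < 4 * ((d:ℝ) - 1))]
      have g1 : (0:ℝ) ≤ ((d:ℝ) - 2) * ((q:ℝ) - 2) * x :=
        mul_nonneg (mul_nonneg (by linarith only [hD]) (by linarith only [hQ])) hx0.le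
      have g2 : (0:ℝ) ≤ ((d:ℝ) - 2) * x := mul_nonneg (by linarith only [hD]) hx0.le
      have g3 : (0:ℝ) ≤ ((q:ℝ) - 2) * x := mul_nonneg (by linarith only [hQ]) hx0.le
      nlinarith [g1, g2, g3]
    have h14 : (4/3) * T^2 ≤ x / 3 := by
      rw [hTsq]
      have heq : (4:ℝ)/3 * (x / (4 * ((d:ℝ) - 1))) = x / (3 * ((d:ℝ) - 1)) := by
        field_simp
      rw [heq, div_le_div_iff₀ (by linarith : (0:ℝ) < 3 * ((d:ℝ) - 1)) (by norm_num : (0:ℝ) < 3)]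
      have g4 : (0:ℝ) ≤ x * ((d:ℝ) - 2) := mul_nonneg hx0.le (by linarith only [hD])
      nlinarith [g4]
    have hx2 : x^2 ≤ x / 4 := by
      have g5 : (0:ℝ) ≤ x * (1/4 - x) := mul_nonneg hx0.le (by linarith only [hx4])
      nlinarith [g5]
    linarith only [h12', h13, h14, hx2]
  have hlog2 : Real.log 2 < 0.6931471808 := Real.log_two_lt_d9
  have hcx : (0:ℝ) < (c:ℝ) * x := mul_pos hc0 hx0
  have hfin : Hent q x + (c:ℝ) * (x * (Real.log x - Real.log T) + ((1 - x) * ((1 - x) / (1 - T) - 1)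
          - T + (d:ℝ) * (q:ℝ) * T^2 / ((q:ℝ) - 1)))
      < ((c : ℝ) / 2 - 1) * x * Real.log x +
        (Real.log ((q : ℝ) - 1) + ((c : ℝ) / 2) * Real.log ((d : ℝ) - 1) + 3 * (c : ℝ)) * x := by
    rw [hHent, hlogT]
    have hWc : (c:ℝ) * ((1 - x) * ((1 - x) / (1 - T) - 1) - T
        + (d:ℝ) * (q:ℝ) * T^2 / ((q:ℝ) - 1)) ≤ (c:ℝ) * (7 * x / 12) :=
      mul_le_mul_of_nonneg_left hW hc0.le
    have hl2a : (c:ℝ) * x * Real.log 2 ≤ (c:ℝ) * x * 0.6931471808 :=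
      mul_le_mul_of_nonneg_left hlog2.le hcx.le
    have hl2b : (c:ℝ) * x * 0.6931471808 ≤ (c:ℝ) * x * 0.7 :=
      mul_le_mul_of_nonneg_left (by norm_num : (0.6931471808:ℝ) ≤ 0.7) hcx.le
    have hl2 : (c:ℝ) * x * Real.log 2 ≤ (c:ℝ) * x * 0.7 := hl2a.trans hl2b
    have hxcx : x ≤ (c:ℝ) * x := by
      have := mul_le_mul_of_nonneg_right hC hx0.le
      linarith only [this]
    linarith only [hE1, hWc, hl2, hxcx, hcx]
  calc omegaF q c d x
      ≤ Hent q x + ((c:ℝ)/(d:ℝ)) * (deltaTwo q d x T - Real.log (q:ℝ)) := homega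
    _ ≤ Hent q x + (c:ℝ) * (x * (Real.log x - Real.log T) + ((1 - x) * ((1 - x) / (1 - T) - 1)
          - T + (d:ℝ) * (q:ℝ) * T^2 / ((q:ℝ) - 1))) := by
        linarith only [hkey]
    _ < _ := hfin
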